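/- Let G be a noncompact locally compact second countable group and let Π be an invariant point process on G that is almost surely nonempty. Then Π has infinitely many points almost surely. Conversely, if G is compact then every point process on G is almost surely finite. -/

import Mathlib

open MeasureTheory Set Filter Topology
open scoped ENNReal Pointwise

noncomputable section

/-- Left translation of a configuration. -/
def shift {G : Type*} [Mul G] (g : G) (ω : Set G) : Set G := (g * ·) '' ω

/-- The σ-algebra on the configuration space `Set G`, generated by the point-counting
functions `ω ↦ |ω ∩ U|` for Borel `U`. -/
instance configMS (G : Type*) [MeasurableSpace G] : MeasurableSpace (Set G) :=
  MeasurableSpace.generateFrom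
    {A : Set (Set G) | ∃ (U : Set G) (n : ℕ∞), MeasurableSet U ∧ A = {ω | (ω ∩ U).encard = n}}

/-- The expected number of points of the process in `U`. -/
def expCount {G : Type*} [MeasurableSpace G] (μ : Measure (Set G)) (U : Set G) : ℝ≥0∞ :=
  ∫⁻ ω, ((ω ∩ U).encard : ℝ≥0∞) ∂μ

/-- The space of rooted configurations. -/
def rooted (G : Type*) [One G] : Set (Set G) := {ω | (1 : G) ∈ ω}

/-- The Palm measure (relative to a reference set `U` of unit Haar volume) of a set `A`
of rooted configurations. -/
def palmSet {G : Type*} [Group G] [MeasurableSpace G] (μ : Measure (Set G)) (U : Set G)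
    (A : Set (Set G)) : ℝ≥0∞ :=
  (expCount μ U)⁻¹ * ∫⁻ ω, (({g ∈ U | shift g⁻¹ ω ∈ A}).encard : ℝ≥0∞) ∂μ

/-- The Palm expectation (relative to a reference set `U` of unit Haar volume) of a
function `h` of rooted configurations. -/
def palmLintegral {G : Type*} [Group G] [MeasurableSpace G] (μ : Measure (Set G)) (U : Set G)
    (h : Set G → ℝ≥0∞) : ℝ≥0∞ :=
  (expCount μ U)⁻¹ * ∫⁻ ω, ∑' x : ↥(ω ∩ U), h (shift (x : G)⁻¹ ω) ∂μ

section Aux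

variable {G : Type*}

lemma encast_ne_top {e : ℕ∞} (h : e ≠ ⊤) : (e : ℝ≥0∞) ≠ ⊤ := fun hc =>
  h (ENat.toENNReal_strictMono.injective (hc.trans ENat.toENNReal_top.symm))

lemma encast_ne_zero {e : ℕ∞} (h : e ≠ 0) : (e : ℝ≥0∞) ≠ 0 := fun hc =>
  h (ENat.toENNReal_strictMono.injective (hc.trans ENat.toENNReal_zero.symm))

/-- A test kernel: normalized count. -/
def pkern (ω B : Set G) : ℝ≥0∞ :=
  if ω.encard ≠ ⊤ ∧ ω.encard ≠ 0
  then ((ω.encard : ℝ≥0∞))⁻¹ * ((ω ∩ B).encard : ℝ≥0∞) else 0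

lemma pkern_def (ω B : Set G) : pkern ω B =
    if ω.encard ≠ ⊤ ∧ ω.encard ≠ 0
    then ((ω.encard : ℝ≥0∞))⁻¹ * ((ω ∩ B).encard : ℝ≥0∞) else 0 := rfl

lemma measurable_encard_inter [MeasurableSpace G] {B : Set G} (hB : MeasurableSet B) :
    Measurable fun ω : Set G => (ω ∩ B).encard := by
  refine measurable_to_countable' fun n => ?_
  have h : (fun ω : Set G => (ω ∩ B).encard) ⁻¹' {n} = {ω | (ω ∩ B).encard = n} := rfl
  rw [h]
  exact MeasurableSpace.measurableSet_generateFrom ⟨B, n, hB, rfl⟩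

lemma measurable_encardSet [MeasurableSpace G] : Measurable fun ω : Set G => ω.encard := by
  have := measurable_encard_inter (B := (univ : Set G)) MeasurableSet.univ
  simpa only [Set.inter_univ] using this

lemma encard_shift_inter [Group G] (g : G) (ω B : Set G) :
    (shift g ω ∩ B).encard = (ω ∩ (g * ·) ⁻¹' B).encard := by
  rw [show shift g ω ∩ B = (g * ·) '' (ω ∩ (g * ·) ⁻¹' B) from
    (Set.image_inter_preimage _ _ _).symm]
  exact Function.Injective.encard_image (mul_right_injective g) _

lemma encard_shift [Group G] (g : G) (ω : Set G) : (shift g ω).encard = ω.encard :=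
  Function.Injective.encard_image (mul_right_injective g) ω

lemma measurable_shift [Group G] [MeasurableSpace G]
    (hmul : ∀ g : G, Measurable (g * ·)) (g : G) :
    Measurable (shift g : Set G → Set G) := by
  refine measurable_generateFrom ?_
  rintro A ⟨U, n, hU, rfl⟩
  have h : shift g ⁻¹' {ω | (ω ∩ U).encard = n} = {ω | (ω ∩ (g * ·) ⁻¹' U).encard = n} := by
    ext ω
    simp [encard_shift_inter]
  rw [h]
  exact MeasurableSpace.measurableSet_generateFrom ⟨_, n, (hmul g) hU, rfl⟩

lemma encard_cast_eq_tsum (s : Set G) :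
    (s.encard : ℝ≥0∞) = ∑' x : G, s.indicator (fun _ => (1 : ℝ≥0∞)) x :=
  (ENNReal.tsum_set_one s).symm.trans (tsum_subtype s fun _ => (1 : ℝ≥0∞))

lemma encard_inter_iUnion (ω : Set G) {B : ℕ → Set G} (hd : Pairwise (Function.onFun Disjoint B)) :
    ((ω ∩ ⋃ i, B i).encard : ℝ≥0∞) = ∑' i, ((ω ∩ B i).encard : ℝ≥0∞) := by
  simp only [encard_cast_eq_tsum]
  rw [ENNReal.tsum_comm]
  refine tsum_congr fun x => ?_
  by_cases hx : x ∈ ω ∩ ⋃ i, B i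
  · obtain ⟨hxω, hxU⟩ := hx
    obtain ⟨i0, hi0⟩ := mem_iUnion.1 hxU
    rw [indicator_of_mem (show x ∈ ω ∩ ⋃ i, B i from ⟨hxω, mem_iUnion.2 ⟨i0, hi0⟩⟩)]
    rw [tsum_eq_single i0, indicator_of_mem (show x ∈ ω ∩ B i0 from ⟨hxω, hi0⟩)]
    intro j hj
    refine indicator_of_notMem ?_ _
    rintro ⟨-, hxj⟩
    exact Set.disjoint_left.1 (hd hj) hxj hi0
  · rw [indicator_of_notMem hx]
    refine (ENNReal.tsum_eq_zero.2 fun i => ?_).symm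
    refine indicator_of_notMem ?_ _
    rintro ⟨hxω, hxi⟩
    exact hx ⟨hxω, mem_iUnion.2 ⟨i, hxi⟩⟩

lemma measurable_pkern [MeasurableSpace G] {B : Set G} (hB : MeasurableSet B) :
    Measurable fun ω : Set G => pkern ω B := by
  have h1 := measurable_encard_inter hB
  have h2 : Measurable fun ω : Set G => ω.encard := measurable_encardSet
  exact (measurable_of_countable (fun p : ℕ∞ × ℕ∞ =>
    if p.2 ≠ ⊤ ∧ p.2 ≠ 0 then ((p.2 : ℝ≥0∞))⁻¹ * (p.1 : ℝ≥0∞) else 0)).comp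
    (h1.prodMk h2)

lemma pkern_shift [Group G] (g : G) (ω B : Set G) :
    pkern (shift g ω) B = pkern ω ((g * ·) ⁻¹' B) := by
  rw [pkern_def, pkern_def, encard_shift, encard_shift_inter]

lemma pkern_iUnion (ω : Set G) {B : ℕ → Set G} (hd : Pairwise (Function.onFun Disjoint B)) :
    pkern ω (⋃ i, B i) = ∑' i, pkern ω (B i) := by
  simp only [pkern_def]
  by_cases h : ω.encard ≠ ⊤ ∧ ω.encard ≠ 0
  · rw [if_pos h, encard_inter_iUnion ω hd, ← ENNReal.tsum_mul_left]
    exact tsum_congr fun i => (if_pos h).symm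
  · rw [if_neg h]
    exact (ENNReal.tsum_eq_zero.2 fun i => if_neg h).symm

lemma pkern_empty (ω : Set G) : pkern ω (∅ : Set G) = 0 := by
  simp [pkern_def]

end Aux

/-- an a.s. nonempty invariant point process on a noncompact group has
infinitely many points a.s.; conversely on a compact group every point process is a.s. finite. -/
theorem statement1 {G : Type*} [Group G] [TopologicalSpace G] [IsTopologicalGroup G]
    [LocallyCompactSpace G] [SecondCountableTopology G] [MeasurableSpace G] [BorelSpace G]
    (μ : Measure (Set G)) [IsProbabilityMeasure μ]
    (hsupp : ∀ᵐ ω ∂μ, IsClosed ω ∧ DiscreteTopology ↥ω)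
    (hinv : ∀ g : G, μ.map (shift g) = μ) :
    (¬ CompactSpace G → (∀ᵐ ω ∂μ, ω ≠ ∅) → ∀ᵐ ω ∂μ, ω.Infinite) ∧
      (CompactSpace G → ∀ᵐ ω ∂μ, ω.Finite) := by
  have hmul : ∀ g : G, Measurable (g * ·) := fun g => (continuous_mul_left g).measurable
  constructor
  · intro hnc hne
    haveI : NoncompactSpace G := not_compactSpace_iff.1 hnc
    -- the invariant measure on G
    set ν : Measure G := Measure.ofMeasurable (fun B _ => ∫⁻ ω, pkern ω B ∂μ)
      (by simp [pkern_empty])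
      (by
        intro B hB hd
        rw [← lintegral_tsum fun i => (measurable_pkern (hB i)).aemeasurable]
        exact lintegral_congr fun ω => pkern_iUnion ω hd) with hνdef
    have hν : ∀ B : Set G, MeasurableSet B → ν B = ∫⁻ ω, pkern ω B ∂μ := fun B hB =>
      Measure.ofMeasurable_apply B hB
    -- the set of finite nonempty configurations
    set S : Set (Set G) := {ω : Set G | ω.encard ≠ ⊤ ∧ ω.encard ≠ 0} with hSdef
    have hS : MeasurableSet S := by
      have h : S = (fun ω : Set G => ω.encard) ⁻¹' {n : ℕ∞ | n ≠ ⊤ ∧ n ≠ 0} := rfl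
      rw [h]
      exact measurable_encardSet trivial
    have hνuniv : ν univ = μ S := by
      rw [hν univ MeasurableSet.univ, ← lintegral_indicator_one hS]
      refine lintegral_congr fun ω => ?_
      by_cases h : ω.encard ≠ ⊤ ∧ ω.encard ≠ 0
      · have e1 : (ω.encard : ℝ≥0∞) ≠ ⊤ := encast_ne_top h.1
        have e2 : (ω.encard : ℝ≥0∞) ≠ 0 := encast_ne_zero h.2
        have hmem : ω ∈ S := h
        rw [Set.indicator_of_mem hmem, pkern_def, if_pos h, Set.inter_univ,
          ENNReal.inv_mul_cancel e2 e1, Pi.one_apply]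
      · have hmem : ω ∉ S := h
        rw [Set.indicator_of_notMem hmem, pkern_def, if_neg h]
    -- invariance of ν
    have hinvν : ∀ (g : G) (B : Set G), MeasurableSet B → ν ((g * ·) ⁻¹' B) = ν B := by
      intro g B hB
      rw [hν _ ((hmul g) hB), hν _ hB]
      calc ∫⁻ ω, pkern ω ((g * ·) ⁻¹' B) ∂μ
          = ∫⁻ ω, pkern (shift g ω) B ∂μ :=
            lintegral_congr fun ω => (pkern_shift g ω B).symm
        _ = ∫⁻ ω, pkern ω B ∂(μ.map (shift g)) :=
            (lintegral_map (measurable_pkern hB) (measurable_shift hmul g)).symm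
        _ = ∫⁻ ω, pkern ω B ∂μ := by rw [hinv g]
    haveI : ν.IsMulLeftInvariant := ⟨fun g => Measure.ext fun B hB => by
      rw [Measure.map_apply (hmul g) hB, hinvν g B hB]⟩
    -- it suffices that μ S = 0
    have hSeq : S = {ω : Set G | ω.Finite ∧ ω.Nonempty} := by
      ext ω
      simp [hSdef, Set.encard_ne_top_iff, Set.encard_ne_zero, Set.nonempty_iff_ne_empty]
    suffices hμS : μ S = 0 by
      rw [hSeq] at hμS
      have h1 : ∀ᵐ ω ∂μ, ¬(ω.Finite ∧ ω.Nonempty) := by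
        rw [ae_iff]
        simpa only [not_not] using hμS
      filter_upwards [h1, hne] with ω h hne'
      exact fun hf => h ⟨hf, nonempty_iff_ne_empty.2 hne'⟩
    by_contra hμS
    have hν0 : ν ≠ 0 := by
      intro h0
      apply hμS
      rw [← hνuniv, h0]
      simp
    haveI : ν.IsOpenPosMeasure := by
      constructor
      intro U hU hUne
      intro hνU
      apply hν0
      have hcov : ⋃ g : G, (g * ·) ⁻¹' U = univ := by
        ext x
        simp only [mem_iUnion, mem_preimage, mem_univ, iff_true]
        obtain ⟨u, hu⟩ := hUne
        exact ⟨u * x⁻¹, by simpa [mul_assoc] using hu⟩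
      obtain ⟨t, htc, htU⟩ := TopologicalSpace.isOpen_iUnion_countable
        (fun g : G => (g * ·) ⁻¹' U) (fun g => hU.preimage (continuous_mul_left g))
      have hz : ν univ = 0 := by
        rw [← hcov, ← htU]
        refine (measure_biUnion_null_iff htc).2 fun g _ => ?_
        rw [hinvν g U hU.measurableSet]
        exact hνU
      refine Measure.ext fun B hB => ?_
      simp only [Measure.coe_zero, Pi.zero_apply]
      exact le_antisymm (hz ▸ measure_mono (subset_univ B)) zero_le
    have htop : ν univ = ∞ := measure_univ_of_isMulLeftInvariant ν
    have hle : ν univ ≤ 1 := by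
      rw [hνuniv]
      exact prob_le_one
    rw [htop] at hle
    simp at hle
  · intro hc
    haveI := hc
    filter_upwards [hsupp] with ω hω
    exact hω.1.isCompact.finite (isDiscrete_iff_discreteTopology.2 hω.2)
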